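/- Let Σ = (1−ρ)I + ρ11ᵀ ∈ ℝ^{p×p} with ρ ∈ (0,1). Then (i) min_{λ ∈ T^{p−1}} λᵀΣλ = ρ + (1−ρ)/p; and (ii) for any nonempty S ⊂ {1,…,p} with |S| = s < p, min over λ ∈ T^{p−s−1} of λᵀ(Σ_{S^cS^c} − Σ_{S^cS}Σ_{SS}^{−1}Σ_{SS^c})λ equals ρ(1−ρ)/(1 + (s−1)ρ) + (1−ρ)/(p−s). -/

import Mathlib

open Matrix Finset

noncomputable section

lemma aux_sum_sq_ge {ι : Type*} [Fintype ι] (n : ℕ) (hn : Fintype.card ι = n) (hn0 : 0 < n)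
    (l : ι → ℝ) (hl : ∑ a, l a = 1) : 1 / (n : ℝ) ≤ ∑ a, (l a)^2 := by
  have h : (0:ℝ) ≤ ∑ a, (l a - 1/n)^2 := Finset.sum_nonneg fun _ _ => sq_nonneg _
  have hn' : (n:ℝ) ≠ 0 := Nat.cast_ne_zero.mpr hn0.ne'
  have expand : ∑ a, (l a - 1/(n:ℝ))^2 = ∑ a, (l a)^2 - 1/n := by
    have h1 : ∀ a, (l a - 1/(n:ℝ))^2 = (l a)^2 - 2*(1/n)*l a + (1/n)^2 := fun a => by ring
    simp_rw [h1]
    rw [Finset.sum_add_distrib, Finset.sum_sub_distrib, ← Finset.mul_sum, hl,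
      Finset.sum_const, Finset.card_univ, hn, nsmul_eq_mul]
    field_simp
    ring
  linarith

lemma aux_quad_form {ι : Type*} [Fintype ι] [DecidableEq ι] (α c : ℝ)
    (A : Matrix ι ι ℝ) (hA : ∀ a b, A a b = (if a = b then α else 0) + c)
    (l : ι → ℝ) (hl : ∑ a, l a = 1) :
    l ⬝ᵥ A.mulVec l = α * ∑ a, (l a)^2 + c := by
  simp only [dotProduct, mulVec, dotProduct]
  have h1 : ∀ a, l a * ∑ b, A a b * l b = α * (l a)^2 + c * l a := by
    intro a
    have : ∑ b, A a b * l b = α * l a + c * ∑ b, l b := by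
      simp_rw [hA, add_mul, Finset.sum_add_distrib, ite_mul, zero_mul,
        Finset.sum_ite_eq, Finset.mem_univ, if_true, ← Finset.mul_sum]
    rw [this, hl]
    ring
  simp_rw [h1]
  rw [Finset.sum_add_distrib, ← Finset.mul_sum, ← Finset.mul_sum, hl]
  ring

lemma aux_key {ι : Type*} [Fintype ι] [DecidableEq ι] (n : ℕ) (hn : Fintype.card ι = n)
    (hn0 : 0 < n) (α c : ℝ) (hα : 0 ≤ α)
    (A : Matrix ι ι ℝ) (hA : ∀ a b, A a b = (if a = b then α else 0) + c) :
    IsLeast {v : ℝ | ∃ l : ι → ℝ, (∀ a, 0 ≤ l a) ∧ (∑ a, l a) = 1 ∧ v = l ⬝ᵥ A.mulVec l}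
      (α / n + c) := by
  have hn' : (n:ℝ) ≠ 0 := Nat.cast_ne_zero.mpr hn0.ne'
  have hsum : ∑ _a : ι, (1:ℝ)/n = 1 := by
    rw [Finset.sum_const, Finset.card_univ, hn, nsmul_eq_mul]; field_simp
  constructor
  · refine ⟨fun _ => 1/n, fun a => by positivity, hsum, ?_⟩
    rw [aux_quad_form α c A hA _ hsum]
    have h2 : ∑ _a : ι, ((1:ℝ)/n)^2 = 1/n := by
      rw [Finset.sum_const, Finset.card_univ, hn, nsmul_eq_mul]
      field_simp
    rw [h2, div_eq_mul_one_div α (n:ℝ)]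
  · rintro v ⟨l, hl0, hl1, rfl⟩
    rw [aux_quad_form α c A hA l hl1]
    have h := aux_sum_sq_ge n hn hn0 l hl1
    have := mul_le_mul_of_nonneg_left h hα
    rw [div_eq_mul_one_div α (n:ℝ)]
    linarith

lemma aux_sum_ite_prod {ι : Type*} [Fintype ι] [DecidableEq ι] (a b : ι) (x y z w : ℝ) :
    ∑ k, ((if a = k then x else 0) + y) * ((if k = b then z else 0) + w)
    = (if a = b then x * z else 0) + x * w + y * z + (Fintype.card ι) * (y * w) := by
  have h1 : ∀ k : ι, ((if a = k then x else 0) + y) * ((if k = b then z else 0) + w)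
      = (if a = k then (if k = b then x * z else 0) else 0)
        + (if a = k then x * w else 0) + (if k = b then y * z else 0) + y * w := by
    intro k
    by_cases h : a = k
    · subst h
      by_cases h' : a = b <;> simp [h'] <;> ring
    · by_cases h' : k = b
      · subst h'
        simp [h]
        ring
      · simp [h, h']
  simp_rw [h1, Finset.sum_add_distrib, Finset.sum_ite_eq, Finset.sum_ite_eq',
    Finset.mem_univ, if_true, Finset.sum_const, Finset.card_univ, nsmul_eq_mul]

theorem stmt_18 (p : ℕ) (hp : 0 < p) (ρ : ℝ) (hρ0 : 0 < ρ) (hρ1 : ρ < 1)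
    (Sig : Matrix (Fin p) (Fin p) ℝ)
    (hSig : ∀ j k, Sig j k = if j = k then 1 else ρ) :
    IsLeast {v : ℝ | ∃ l ∈ stdSimplex ℝ (Fin p), v = l ⬝ᵥ Sig.mulVec l}
      (ρ + (1 - ρ) / p) ∧
    ∀ (S : Finset (Fin p)), S.Nonempty → ∀ s : ℕ, S.card = s → s < p →
      IsLeast {v : ℝ | ∃ l : {x // x ∈ Sᶜ} → ℝ, (∀ a, 0 ≤ l a) ∧ (∑ a, l a) = 1 ∧
          v = l ⬝ᵥ (Matrix.of fun a b : {x // x ∈ Sᶜ} =>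
            Sig a.1 b.1 - (fun c : {x // x ∈ S} => Sig a.1 c.1) ⬝ᵥ
              ((Sig.submatrix (fun c : {x // x ∈ S} => c.1)
                  (fun c : {x // x ∈ S} => c.1))⁻¹.mulVec
                (fun c : {x // x ∈ S} => Sig c.1 b.1))).mulVec l}
        (ρ * (1 - ρ) / (1 + ((s : ℝ) - 1) * ρ) + (1 - ρ) / ((p : ℝ) - s)) := by
  have hρ1' : (1:ℝ) - ρ ≠ 0 := by linarith
  constructor
  · have h1 := aux_key p (Fintype.card_fin p) hp (1-ρ) ρ (by linarith) Sig
      (fun a b => by rw [hSig]; split <;> ring)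
    have hset : {v : ℝ | ∃ l ∈ stdSimplex ℝ (Fin p), v = l ⬝ᵥ Sig.mulVec l}
        = {v : ℝ | ∃ l : Fin p → ℝ, (∀ a, 0 ≤ l a) ∧ (∑ a, l a) = 1 ∧
            v = l ⬝ᵥ Sig.mulVec l} := by
      ext v
      simp [stdSimplex, and_assoc]
    rw [hset, show ρ + (1-ρ)/(p:ℝ) = (1-ρ)/(p:ℝ) + ρ from add_comm _ _]
    exact h1
  · intro S hS s hcard hsp
    set d : ℝ := 1 + ((s:ℝ) - 1) * ρ with hd_def
    have hs1 : 1 ≤ s := hcard ▸ Finset.card_pos.mpr hS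
    have hs1' : (1:ℝ) ≤ (s:ℝ) := by exact_mod_cast hs1
    have hd0 : 0 < d := by nlinarith
    have hcardS : Fintype.card {x // x ∈ S} = s := by
      rw [Fintype.card_coe, hcard]
    set B := Sig.submatrix (fun c : {x // x ∈ S} => c.1) (fun c : {x // x ∈ S} => c.1)
      with hB_def
    have hB : ∀ a k : {x // x ∈ S}, B a k = (if a = k then (1-ρ) else 0) + ρ := by
      intro a k
      rw [hB_def, Matrix.submatrix_apply, hSig]
      by_cases h : a = k
      · subst h
        rw [if_pos rfl, if_pos rfl]
        ring
      · rw [if_neg (fun hc => h (Subtype.ext hc)), if_neg h]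
        ring
    set C : Matrix {x // x ∈ S} {x // x ∈ S} ℝ :=
      Matrix.of fun a b => (if a = b then 1/(1-ρ) else 0) + (-(ρ/((1-ρ)*d))) with hC_def
    have hBC : B * C = 1 := by
      ext a b
      rw [Matrix.mul_apply]
      simp_rw [hB, hC_def, Matrix.of_apply]
      rw [aux_sum_ite_prod a b (1-ρ) ρ (1/(1-ρ)) (-(ρ/((1-ρ)*d))), hcardS,
        Matrix.one_apply]
      split
      · field_simp
        ring
      · field_simp
        ring
    have hBinv : B⁻¹ = C := Matrix.inv_eq_right_inv hBC
    have hne : ∀ (a : {x // x ∈ Sᶜ}) (c : {x // x ∈ S}), Sig a.1 c.1 = ρ := by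
      intro a c
      rw [hSig]
      have ha := a.2
      rw [Finset.mem_compl] at ha
      have : a.1 ≠ c.1 := fun h => ha (h ▸ c.2)
      simp [this]
    have hne' : ∀ (c : {x // x ∈ S}) (b : {x // x ∈ Sᶜ}), Sig c.1 b.1 = ρ := by
      intro c b
      rw [hSig]
      have hb := b.2
      rw [Finset.mem_compl] at hb
      have : c.1 ≠ b.1 := fun h => hb (h ▸ c.2)
      simp [this]
    have hdot : ∀ (a b : {x // x ∈ Sᶜ}),
        (fun c : {x // x ∈ S} => Sig a.1 c.1) ⬝ᵥ
          C.mulVec (fun c : {x // x ∈ S} => Sig c.1 b.1) = (s:ℝ) * ρ^2 / d := by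
      intro a b
      simp only [dotProduct, mulVec, dotProduct]
      have hrow : ∀ c : {x // x ∈ S}, ∑ c', C c c' * Sig c'.1 b.1
          = ρ * (1/(1-ρ) + (s:ℝ) * (-(ρ/((1-ρ)*d)))) := by
        intro c
        simp_rw [hne', hC_def, Matrix.of_apply, add_mul, Finset.sum_add_distrib,
          ite_mul, zero_mul, Finset.sum_ite_eq, Finset.mem_univ, if_true,
          Finset.sum_const, Finset.card_univ, hcardS, nsmul_eq_mul]
        ring
      simp_rw [hne, hrow, Finset.sum_const, Finset.card_univ, hcardS, nsmul_eq_mul]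
      field_simp
      ring
    have hps : (0:ℕ) < p - s := Nat.sub_pos_of_lt hsp
    have hcardSc : Fintype.card {x // x ∈ Sᶜ} = p - s := by
      rw [Fintype.card_coe, Finset.card_compl, hcard, Fintype.card_fin]
    have hkey := aux_key (p - s) hcardSc hps (1-ρ) (ρ - (s:ℝ) * ρ^2 / d)
      (by linarith)
      (Matrix.of fun a b : {x // x ∈ Sᶜ} =>
            Sig a.1 b.1 - (fun c : {x // x ∈ S} => Sig a.1 c.1) ⬝ᵥ
              ((Sig.submatrix (fun c : {x // x ∈ S} => c.1)
                  (fun c : {x // x ∈ S} => c.1))⁻¹.mulVec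
                (fun c : {x // x ∈ S} => Sig c.1 b.1)))
      (by
        intro a b
        rw [Matrix.of_apply, ← hB_def, hBinv, hdot, hSig]
        by_cases h : a = b
        · subst h
          rw [if_pos rfl, if_pos rfl]
          ring
        · rw [if_neg (fun hc => h (Subtype.ext hc)), if_neg h]
          ring)
    have hval : ρ * (1 - ρ) / d + (1 - ρ) / ((p : ℝ) - s)
        = (1-ρ) / ((p - s : ℕ) : ℝ) + (ρ - (s:ℝ) * ρ^2 / d) := by
      have hcast : ((p - s : ℕ) : ℝ) = (p:ℝ) - s := by
        push_cast [Nat.cast_sub hsp.le]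
        ring
      rw [hcast]
      have hps' : (0:ℝ) < (p:ℝ) - s := by
        have : (s:ℝ) < p := by exact_mod_cast hsp
        linarith
      field_simp
      ring
    rw [hval]
    exact hkey
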